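/- Let a, b ∈ ℂ with a − b a nonnegative integer. If there exists a monic polynomial Q ∈ ℂ[X] such that (X + a)(X + b − 1)·Q(X) = X(X − 1)·Q(X + 1) (equality of polynomials), then b is a nonnegative integer. -/
import Mathlib


open Polynomial

/-- Let `a, b ∈ ℂ` with `a - b` a nonnegative integer. If there is a monic polynomial `Q`
with `(X + a)(X + b - 1)·Q(X) = X(X - 1)·Q(X + 1)`, then `b` is a nonnegative integer. -/
theorem nonneg_int_of_monic_shift (a b : ℂ) (hab : ∃ k : ℕ, a - b = (k : ℂ))
    (h : ∃ Q : Polynomial ℂ, Q.Monic ∧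
      (X + C a) * (X + C b - 1) * Q = X * (X - 1) * (Q.comp (X + 1))) :
    ∃ k : ℕ, b = (k : ℂ) := by
  obtain ⟨Q, hQ, hEq⟩ := h
  by_contra hb
  push_neg at hb
  have hev : ∀ x : ℂ, (x + a) * (x + b - 1) * Q.eval x = x * (x - 1) * Q.eval (x + 1) := by
    intro x
    have := congrArg (Polynomial.eval x) hEq
    simpa [eval_comp] using this
  have key : ∀ n : ℕ, Q.eval ((n : ℂ) + 2 - b) = 0 := by
    intro n
    induction n with
    | zero =>
      have h1 := hev (1 - b)
      have hL : (1 - b + b - 1 : ℂ) = 0 := by ring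
      have h2 : (1 - b) * (1 - b - 1) * Q.eval (1 - b + 1) = 0 := by
        rw [← h1, hL]; ring
      have hb0 : (1 : ℂ) - b ≠ 0 := by
        intro hc
        exact hb 1 (by push_cast; linear_combination -hc)
      have hb1 : (1 : ℂ) - b - 1 ≠ 0 := by
        intro hc
        exact hb 0 (by push_cast; linear_combination -hc)
      have := (mul_eq_zero.mp h2).resolve_left
        (mul_ne_zero hb0 hb1)
      have hx : (1 : ℂ) - b + 1 = (0 : ℕ) + 2 - b := by push_cast; ring
      rwa [hx] at this
    | succ n ih =>
      have h1 := hev ((n : ℂ) + 2 - b)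
      rw [ih, mul_zero] at h1
      have h2 : ((n : ℂ) + 2 - b) * ((n : ℂ) + 2 - b - 1) * Q.eval ((n : ℂ) + 2 - b + 1) = 0 := by
        rw [← h1]
      have hb0 : ((n : ℂ) + 2 - b) ≠ 0 := by
        intro hc
        exact hb (n + 2) (by push_cast; linear_combination -hc)
      have hb1 : ((n : ℂ) + 2 - b - 1) ≠ 0 := by
        intro hc
        exact hb (n + 1) (by push_cast; linear_combination -hc)
      have := (mul_eq_zero.mp h2).resolve_left (mul_ne_zero hb0 hb1)
      have hx : (n : ℂ) + 2 - b + 1 = ((n + 1 : ℕ) : ℂ) + 2 - b := by push_cast; ring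
      rwa [hx] at this
  have hQ0 : Q = 0 := by
    apply Polynomial.eq_zero_of_infinite_isRoot
    apply Set.infinite_of_injective_forall_mem
      (f := fun n : ℕ => (n : ℂ) + 2 - b)
    · intro m n hmn
      have : (m : ℂ) = n := by
        have := hmn
        simp only at this
        linear_combination this
      exact_mod_cast this
    · intro n
      exact key n
  exact hQ.ne_zero hQ0
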